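/- Let Γ be a compact Hausdorff topological space which is also a group such that multiplication Γ × Γ → Γ is (jointly) continuous. Then inversion is continuous, i.e. Γ is a topological group. -/

import Mathlib

/-- Auxiliary: the shear equivalence `(x, y) ↦ (x, x * y)` on `Γ × Γ`. -/
def shearEquiv (Γ : Type*) [Group Γ] : Γ × Γ ≃ Γ × Γ where
  toFun p := (p.1, p.1 * p.2)
  invFun p := (p.1, p.1⁻¹ * p.2)
  left_inv p := by simp
  right_inv p := by simp

/- STATEMENT 4 (Ellis): A compact Hausdorff group with jointly continuous
multiplication has continuous inversion, i.e. is a topological group. -/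
theorem topologicalGroup_of_compact_continuousMul
    {Γ : Type*} [Group Γ] [TopologicalSpace Γ] [CompactSpace Γ] [T2Space Γ]
    [ContinuousMul Γ] : IsTopologicalGroup Γ := by
  have hc : Continuous (shearEquiv Γ) :=
    continuous_fst.prodMk (continuous_fst.mul continuous_snd)
  have hs : Continuous (fun p : Γ × Γ => (p.1, p.1⁻¹ * p.2)) := by
    have := hc.continuous_symm_of_equiv_compact_to_t2
    simpa only [shearEquiv, Equiv.coe_fn_symm_mk] using this
  refine { continuous_inv := ?_ }
  have : Continuous fun x : Γ => ((fun p : Γ × Γ => (p.1, p.1⁻¹ * p.2)) (x, 1)).2 :=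
    (hs.comp (continuous_id.prodMk continuous_const)).snd
  simpa using this
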